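/- Let Z_1 ≤ Z_2 ≤ ... ≤ Z_N be real numbers with Z_1 + ... + Z_N = 0 and Z_N − Z_1 ≤ d. Then for every V ∈ {2, 3, ..., N}, the V-th elementary symmetric polynomial satisfies |e_V(Z_1, ..., Z_N)| ≤ C(N, V) · (d/2)^V, where C(N, V) is the binomial coefficient. -/

import Mathlib

set_option maxHeartbeats 1000000
open Finset

lemma pow_le_choose' (N V : ℕ) (h : V ≤ N) : N ^ V ≤ N.choose V * V ^ V := by
  have key : V.factorial * N ^ V ≤ N.descFactorial V * V ^ V := by
    rw [← Nat.descFactorial_self V, Nat.descFactorial_eq_prod_range,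
      Nat.descFactorial_eq_prod_range]
    have e1 : ∀ (K L : ℕ), (∏ i ∈ range V, (K - i)) * L ^ V = ∏ i ∈ range V, ((K - i) * L) := by
      intro K L
      rw [Finset.prod_mul_distrib, Finset.prod_const, Finset.card_range]
    rw [e1, e1]
    apply Finset.prod_le_prod'
    intro i hi
    rw [Nat.sub_mul, Nat.sub_mul, Nat.mul_comm V N]
    exact Nat.sub_le_sub_left (Nat.mul_le_mul_left i h) _
  rw [Nat.descFactorial_eq_factorial_mul_choose, Nat.mul_assoc] at key
  exact Nat.le_of_mul_le_mul_left key (Nat.factorial_pos V)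

lemma choose_sq_bound (N V : ℕ) (h1 : V ≤ N) :
    N ^ N ≤ (N.choose V)^2 * (V ^ V * (N - V) ^ (N - V)) := by
  have a1 := pow_le_choose' N V h1
  have a2 := pow_le_choose' N (N - V) (Nat.sub_le N V)
  rw [Nat.choose_symm h1] at a2
  calc N ^ N = N ^ V * N ^ (N - V) := by rw [← pow_add]; congr 1; omega
    _ ≤ (N.choose V * V ^ V) * (N.choose V * (N - V) ^ (N - V)) := Nat.mul_le_mul a1 a2
    _ = (N.choose V)^2 * (V ^ V * (N - V) ^ (N - V)) := by ring

open Finset Complex Real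

lemma amgm (N : ℕ) (hN : 0 < N) (a : Fin N → ℝ) (ha : ∀ i, 0 ≤ a i) :
    ∏ i, a i ≤ ((∑ i, a i) / N) ^ N := by
  have hw : ∀ i ∈ (univ : Finset (Fin N)), (0:ℝ) ≤ (N:ℝ)⁻¹ := by
    intro i _; positivity
  have hw1 : ∑ _i ∈ (univ : Finset (Fin N)), (N:ℝ)⁻¹ = 1 := by
    simp [Finset.card_univ]
    field_simp
  have h := Real.geom_mean_le_arith_mean_weighted univ (fun _ => (N:ℝ)⁻¹) a hw hw1
    (fun i _ => ha i)
  have h2 : ∏ i, a i = (∏ i, a i ^ ((N:ℝ)⁻¹)) ^ N := by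
    rw [← Finset.prod_pow]
    congr 1; ext i
    rw [← Real.rpow_natCast (a i ^ ((N:ℝ)⁻¹)) N, ← Real.rpow_mul (ha i)]
    rw [inv_mul_cancel₀ (by positivity : (N:ℝ) ≠ 0), Real.rpow_one]
  rw [h2]
  have hnn : 0 ≤ ∏ i, a i ^ ((N:ℝ)⁻¹) := Finset.prod_nonneg fun i _ => Real.rpow_nonneg (ha i) _
  apply pow_le_pow_left₀ hnn
  calc ∏ i, a i ^ ((N:ℝ)⁻¹) ≤ ∑ i, (N:ℝ)⁻¹ * a i := h
    _ = (∑ i, a i) / N := by rw [← Finset.mul_sum]; ring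

lemma main_est (N : ℕ) (hN : 0 < N) (Z : Fin N → ℝ) (hsum : ∑ i, Z i = 0)
    (s : ℝ) (hs : 0 ≤ s) (hQ : ∑ i, (Z i)^2 ≤ N * s^2) (V : ℕ) (hV : V ≤ N)
    (r : ℝ) (hr : 0 ≤ r) :
    (∑ t ∈ Finset.univ.powersetCard V, ∏ i ∈ t, Z i)^2 * (r^2)^(N-V) ≤ (r^2 + s^2)^N := by
  set E : ℝ := ∑ t ∈ Finset.univ.powersetCard V, ∏ i ∈ t, Z i with hE
  set M : ℕ := N + 1 with hM
  set ζ : ℂ := Complex.exp (2 * Real.pi * Complex.I / M) with hζdef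
  have hζ : IsPrimitiveRoot ζ M := Complex.isPrimitiveRoot_exp M (by omega)
  have hζ1 : ζ ^ M = 1 := hζ.pow_eq_one
  have hζnorm : ‖ζ‖ = 1 := Complex.norm_eq_one_of_pow_eq_one hζ1 (by omega)
  -- geometric sum over roots of unity
  have key_sum : ∀ k : ℕ, ∑ m ∈ range M, (ζ ^ k) ^ m = if M ∣ k then (M:ℂ) else 0 := by
    intro k
    by_cases hdvd : M ∣ k
    · obtain ⟨c, rfl⟩ := hdvd
      have h1 : ζ ^ (M * c) = 1 := by rw [pow_mul, hζ1, one_pow]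
      rw [h1]
      simp
    · have hne : ζ ^ k ≠ 1 := by
        simp only [ne_eq, hζ.pow_eq_one_iff_dvd]; exact hdvd
      rw [geom_sum_eq hne]
      have h1 : (ζ ^ k) ^ M = 1 := by rw [← pow_mul, mul_comm, pow_mul, hζ1, one_pow]
      simp [h1, hdvd]
  -- divisibility characterization
  have dvd_iff : ∀ c : ℕ, c ≤ N → (M ∣ (N - c) + N * (N - V) ↔ c = V) := by
    intro c hc
    constructor
    · intro hdvd
      have h2 : (M:ℤ) ∣ ((N:ℤ) - c) + N * ((N:ℤ) - V) := by
        have := Int.natCast_dvd_natCast.mpr hdvd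
        push_cast [Nat.cast_sub hc, Nat.cast_sub hV] at this ⊢
        convert this using 2 <;> push_cast <;> ring
      have h3 : (M:ℤ) ∣ ((V:ℤ) - c) := by
        have heq : ((N:ℤ) - c) + N * ((N:ℤ) - V) = (M:ℤ) * ((N:ℤ) - V) + ((V:ℤ) - c) := by
          push_cast [hM]; ring
        rw [heq] at h2
        exact (dvd_add_right ⟨_, rfl⟩).mp h2
      have h4 : ((V:ℤ) - c) = 0 := by
        refine Int.eq_zero_of_dvd_of_natAbs_lt_natAbs h3 ?_
        omega
      omega
    · intro h
      refine ⟨N - V, ?_⟩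
      rw [h, hM]; ring
  -- product expansion
  have expand : ∀ x : ℂ, ∏ i, ((Z i : ℂ) + x)
      = ∑ t ∈ (univ : Finset (Fin N)).powerset, (∏ i ∈ t, (Z i:ℂ)) * x ^ (N - t.card) := by
    intro x
    rw [Finset.prod_add]
    apply Finset.sum_congr rfl
    intro t ht
    congr 1
    rw [Finset.prod_const]
    congr 1
    rw [Finset.card_sdiff_of_subset (Finset.mem_powerset.mp ht), Finset.card_univ, Fintype.card_fin]
  -- the Fourier identity
  have fourier : ∑ m ∈ range M, (∏ i, ((Z i:ℂ) + (r:ℂ) * ζ^m)) * (ζ^(N*(N-V)))^m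
      = (M:ℂ) * (E:ℂ) * (r:ℂ)^(N-V) := by
    have step1 : ∀ m, (∏ i, ((Z i:ℂ) + (r:ℂ) * ζ^m)) * (ζ^(N*(N-V)))^m
        = ∑ t ∈ (univ : Finset (Fin N)).powerset,
            (∏ i ∈ t, (Z i:ℂ)) * (r:ℂ)^(N - t.card) * (ζ^((N - t.card) + N*(N-V)))^m := by
      intro m
      rw [expand ((r:ℂ) * ζ^m), Finset.sum_mul]
      apply Finset.sum_congr rfl
      intro t ht
      rw [mul_pow, ← pow_mul, ← pow_mul, pow_add, pow_mul, pow_mul, pow_mul]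
      ring
    rw [Finset.sum_congr rfl (fun m _ => step1 m), Finset.sum_comm]
    have step2 : ∀ t ∈ (univ : Finset (Fin N)).powerset,
        ∑ m ∈ range M, (∏ i ∈ t, (Z i:ℂ)) * (r:ℂ)^(N - t.card) * (ζ^((N - t.card) + N*(N-V)))^m
        = (∏ i ∈ t, (Z i:ℂ)) * (r:ℂ)^(N - t.card) * (if t.card = V then (M:ℂ) else 0) := by
      intro t ht
      rw [← Finset.mul_sum, key_sum]
      congr 1
      have hcard : t.card ≤ N := by
        simpa using Finset.card_le_card (Finset.mem_powerset.mp ht)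
      simp only [dvd_iff t.card hcard]
    rw [Finset.sum_congr rfl step2]
    have step3 : ∑ t ∈ (univ : Finset (Fin N)).powerset,
        (∏ i ∈ t, (Z i:ℂ)) * (r:ℂ)^(N - t.card) * (if t.card = V then (M:ℂ) else 0)
        = ∑ t ∈ (univ : Finset (Fin N)).powersetCard V, (∏ i ∈ t, (Z i:ℂ)) * (r:ℂ)^(N - V) * (M:ℂ) := by
      rw [Finset.powersetCard_eq_filter, Finset.sum_filter]
      apply Finset.sum_congr rfl
      intro t ht
      by_cases hc : t.card = V
      · simp [hc]
      · simp [hc]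
    rw [step3, ← Finset.sum_mul, ← Finset.sum_mul]
    have hEcast : ∑ t ∈ (univ : Finset (Fin N)).powersetCard V, ∏ i ∈ t, (Z i:ℂ) = (E:ℂ) := by
      rw [hE]; push_cast; rfl
    rw [hEcast]; ring
  -- pointwise bound on the product
  have hB : ∀ m : ℕ, ‖∏ i, ((Z i:ℂ) + (r:ℂ) * ζ^m)‖ ≤ Real.sqrt ((r^2 + s^2)^N) := by
    intro m
    set x : ℂ := (r:ℂ) * ζ^m with hx
    have hxn : x.re^2 + x.im^2 = r^2 := by
      have h1 : ‖x‖ = r := by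
        rw [hx, norm_mul, norm_pow, hζnorm, one_pow, mul_one, Complex.norm_real,
          Real.norm_eq_abs, _root_.abs_of_nonneg hr]
      have h2 : Complex.normSq x = r^2 := by
        rw [← Complex.sq_norm, h1]
      rw [Complex.normSq_apply] at h2
      nlinarith [h2]
    rw [Real.le_sqrt (norm_nonneg _) (by positivity)]
    have hprodsq : ‖∏ i, ((Z i:ℂ) + x)‖^2 = ∏ i, ‖(Z i:ℂ) + x‖^2 := by
      rw [norm_prod, ← Finset.prod_pow]
    rw [hprodsq]
    have hterm : ∀ i, ‖(Z i:ℂ) + x‖^2 = Z i^2 + 2*(Z i)*x.re + r^2 := by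
      intro i
      have h3 : ‖(Z i:ℂ) + x‖^2 = Complex.normSq ((Z i:ℂ) + x) := by
        rw [Complex.sq_norm]
      rw [h3, Complex.normSq_apply, Complex.add_re, Complex.add_im, Complex.ofReal_re,
        Complex.ofReal_im, zero_add]
      nlinarith [hxn]
    have amg := amgm N hN (fun i => ‖(Z i:ℂ)+x‖^2) (fun i => sq_nonneg _)
    have hs2 : (∑ i, ‖(Z i:ℂ)+x‖^2)/(N:ℝ) ≤ r^2+s^2 := by
      have hmid : ∑ i, 2*(Z i)*x.re = 2*x.re*∑ i, Z i := by
        rw [Finset.mul_sum]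
        exact Finset.sum_congr rfl (fun i _ => by ring)
      have hsumeq : ∑ i, ‖(Z i:ℂ)+x‖^2
          = (∑ i, (Z i)^2) + 2*x.re*(∑ i, Z i) + N*r^2 := by
        rw [Finset.sum_congr rfl (fun i _ => hterm i), Finset.sum_add_distrib,
          Finset.sum_add_distrib, hmid, Finset.sum_const, Finset.card_univ,
          Fintype.card_fin, nsmul_eq_mul]
      rw [hsumeq, hsum]
      rw [div_le_iff₀ (by positivity)]
      nlinarith [hQ]
    calc ∏ i, ‖(Z i:ℂ) + x‖^2 ≤ ((∑ i, ‖(Z i:ℂ)+x‖^2)/(N:ℝ))^N := amg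
      _ ≤ (r^2+s^2)^N := pow_le_pow_left₀ (div_nonneg (Finset.sum_nonneg fun i _ => sq_nonneg _) (Nat.cast_nonneg N)) hs2 N
  -- combine
  have hnormS : ‖(M:ℂ) * (E:ℂ) * (r:ℂ)^(N-V)‖ ≤ M * Real.sqrt ((r^2+s^2)^N) := by
    rw [← fourier]
    calc ‖∑ m ∈ range M, (∏ i, ((Z i:ℂ) + (r:ℂ) * ζ^m)) * (ζ^(N*(N-V)))^m‖
        ≤ ∑ m ∈ range M, ‖(∏ i, ((Z i:ℂ) + (r:ℂ) * ζ^m)) * (ζ^(N*(N-V)))^m‖ :=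
          norm_sum_le _ _
      _ ≤ ∑ _m ∈ range M, Real.sqrt ((r^2+s^2)^N) := by
          apply Finset.sum_le_sum; intro m _
          rw [norm_mul]
          have h2 : ‖(ζ^(N*(N-V)))^m‖ = 1 := by
            rw [norm_pow, norm_pow, hζnorm, one_pow, one_pow]
          rw [h2, mul_one]; exact hB m
      _ = M * Real.sqrt ((r^2+s^2)^N) := by
          rw [Finset.sum_const, Finset.card_range, nsmul_eq_mul]
  have hlhs : ‖(M:ℂ) * (E:ℂ) * (r:ℂ)^(N-V)‖ = M * |E| * r^(N-V) := by
    rw [norm_mul, norm_mul, norm_pow]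
    simp [Real.norm_eq_abs, _root_.abs_of_nonneg hr, Complex.norm_real]
  have final : |E| * r^(N-V) ≤ Real.sqrt ((r^2+s^2)^N) := by
    rw [hlhs, mul_assoc] at hnormS
    have hM0 : (0:ℝ) < M := by positivity
    exact le_of_mul_le_mul_left hnormS hM0
  calc E^2 * (r^2)^(N-V) = (|E| * r^(N-V))^2 := by
        rw [mul_pow, _root_.sq_abs, ← pow_mul, ← pow_mul, Nat.mul_comm]
    _ ≤ (Real.sqrt ((r^2+s^2)^N))^2 :=
        pow_le_pow_left₀ (by positivity) final 2
    _ = (r^2+s^2)^N := Real.sq_sqrt (by positivity)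

open Fin.NatCast in
/-- Bound on elementary symmetric polynomials of zero-sum reals with bounded
range: if `Z_1 ≤ ... ≤ Z_N`, `Σ Z_i = 0` and `Z_N − Z_1 ≤ d`, then for every
`V ∈ {2, ..., N}`, `|e_V(Z_1, ..., Z_N)| ≤ C(N, V)·(d/2)^V`. -/
theorem esymm_bound_of_zero_sum (N : ℕ) [NeZero N] (hN : 2 ≤ N)
    (d : ℝ) (hd : 0 ≤ d) (Z : Fin N → ℝ) (hsorted : Monotone Z)
    (hsum : ∑ i, Z i = 0) (hrange : Z (Fin.last (N - 1)) - Z 0 ≤ d) :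
    ∀ V : ℕ, 2 ≤ V → V ≤ N →
      |∑ t ∈ Finset.univ.powersetCard V, ∏ i ∈ t, Z i|
        ≤ (N.choose V : ℝ) * (d / 2) ^ V := by
  intro V hV2 hVN
  have hN0 : 0 < N := by omega
  set s : ℝ := d / 2 with hsdef
  have hs : 0 ≤ s := by positivity
  -- extreme values
  have hL : ∀ i, Z i ≤ Z (Fin.last (N - 1)) := by
    intro i
    apply hsorted
    rw [Fin.le_def]
    simp [Fin.last]
    omega
  have h0le : ∀ i, Z 0 ≤ Z i := by
    intro i
    apply hsorted
    rw [Fin.le_def]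
    simp [Fin.val_zero]
  have h0 : Z 0 ≤ 0 := by
    have h1 : ∑ _i : Fin N, Z 0 ≤ ∑ i, Z i := Finset.sum_le_sum (fun i _ => h0le i)
    rw [Finset.sum_const, Finset.card_univ, Fintype.card_fin, nsmul_eq_mul, hsum] at h1
    by_contra hcon
    push_neg at hcon
    nlinarith [hcon, (by exact_mod_cast hN0 : (0:ℝ) < N)]
  have hLpos : 0 ≤ Z (Fin.last (N - 1)) := by
    have h1 : ∑ i, Z i ≤ ∑ _i : Fin N, Z (Fin.last (N - 1)) :=
      Finset.sum_le_sum (fun i _ => hL i)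
    rw [Finset.sum_const, Finset.card_univ, Fintype.card_fin, nsmul_eq_mul, hsum] at h1
    by_contra hcon
    push_neg at hcon
    nlinarith [hcon, (by exact_mod_cast hN0 : (0:ℝ) < N)]
  -- Popoviciu-type variance bound
  have hQ : ∑ i, (Z i)^2 ≤ N * s^2 := by
    set B := Z (Fin.last (N - 1)) with hB
    have key : ∀ i, (Z i)^2 ≤ Z i * (Z 0 + B) - Z 0 * B := by
      intro i
      nlinarith [mul_nonneg (sub_nonneg.mpr (h0le i)) (sub_nonneg.mpr (hL i))]
    have h1 : ∑ i, (Z i)^2 ≤ ∑ i, (Z i * (Z 0 + B) - Z 0 * B) :=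
      Finset.sum_le_sum (fun i _ => key i)
    rw [Finset.sum_sub_distrib, ← Finset.sum_mul, hsum, Finset.sum_const, Finset.card_univ,
      Fintype.card_fin, nsmul_eq_mul, zero_mul, zero_sub] at h1
    have h2 : -((N:ℝ) * (Z 0 * B)) ≤ N * s^2 := by
      have h3 : (-(Z 0)) * B ≤ s^2 := by
        have h4 : 0 ≤ d - (B - Z 0) := by linarith [hrange]
        have h5 : 0 ≤ B - Z 0 := by linarith [h0le (Fin.last (N-1) : Fin N)]
        nlinarith [sq_nonneg (B + Z 0), mul_nonneg h4 (by linarith : (0:ℝ) ≤ d + (B - Z 0))]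
      nlinarith [mul_le_mul_of_nonneg_left h3 (by exact_mod_cast hN0.le : (0:ℝ) ≤ N)]
    linarith
  set E : ℝ := ∑ t ∈ Finset.univ.powersetCard V, ∏ i ∈ t, Z i with hE
  rcases eq_or_lt_of_le hs with hs0 | hspos
  · -- degenerate case s = 0 : all Z vanish
    have hQ0 : ∑ i, (Z i)^2 ≤ 0 := by rw [← hs0] at hQ; simpa using hQ
    have hZ0 : ∀ i, Z i = 0 := by
      intro i
      have h1 : ∀ i ∈ (univ : Finset (Fin N)), (0:ℝ) ≤ (Z i)^2 := fun i _ => sq_nonneg _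
      have h2 : ∑ i, (Z i)^2 = 0 := le_antisymm hQ0 (Finset.sum_nonneg h1)
      have h3 := (Finset.sum_eq_zero_iff_of_nonneg h1).mp h2 i (Finset.mem_univ i)
      exact pow_eq_zero_iff (by norm_num) |>.mp h3
    have hEzero : E = 0 := by
      rw [hE]
      apply Finset.sum_eq_zero
      intro t ht
      have htcard : t.card = V := (Finset.mem_powersetCard.mp ht).2
      have htne : t.Nonempty := by
        rw [← Finset.card_pos, htcard]; omega
      obtain ⟨i, hi⟩ := htne
      exact Finset.prod_eq_zero hi (hZ0 i)
    rw [hEzero]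
    simp
    positivity
  · -- main case s > 0
    have hCpos : 0 < (N.choose V : ℝ) := by
      exact_mod_cast Nat.choose_pos hVN
    have habs : ∀ Y : ℝ, 0 ≤ Y → E^2 ≤ (Y)^2 → |E| ≤ Y := by
      intro Y hY h6
      calc |E| = Real.sqrt (E^2) := (Real.sqrt_sq_eq_abs E).symm
        _ ≤ Real.sqrt (Y^2) := Real.sqrt_le_sqrt h6
        _ = Y := Real.sqrt_sq hY
    rcases eq_or_lt_of_le hVN with hVN' | hVlt
    · -- V = N
      subst hVN'
      have h1 := main_est V (by omega) Z hsum s hs hQ V le_rfl 0 le_rfl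
      simp only [Nat.sub_self, pow_zero, mul_one] at h1
      have h2 : E^2 ≤ ((V.choose V : ℝ) * s^V)^2 := by
        have h3 : (0^2 + s^2 : ℝ)^V = (s^V)^2 := by
          have h4 : (0^2 + s^2 : ℝ) = s^2 := by norm_num
          rw [h4, pow_right_comm]
        rw [Nat.choose_self]
        push_cast
        rw [one_mul]
        calc E^2 ≤ (0^2 + s^2 : ℝ)^V := h1
          _ = (s^V)^2 := h3
      exact habs _ (by positivity) h2
    · -- 2 ≤ V < N
      set K : ℕ := N - V with hK
      have hK1 : 1 ≤ K := by omega
      have hVK : V + K = N := by omega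
      set u : ℝ := s^2 with hu
      have hupos : 0 < u := by positivity
      set r : ℝ := Real.sqrt (u * K / V) with hr
      have hrnn : 0 ≤ r := Real.sqrt_nonneg _
      have hr2 : r^2 = u * K / V := Real.sq_sqrt (by positivity)
      have h1 := main_est N hN0 Z hsum s hs hQ V hVN r hrnn
      rw [hr2] at h1
      have hVpos : (0:ℝ) < V := by exact_mod_cast (by omega : 0 < V)
      have hKpos : (0:ℝ) < (K:ℝ) := by exact_mod_cast (by omega : 0 < K)
      have hNV : (N:ℝ) = (V:ℝ) + (K:ℝ) := by exact_mod_cast hVK.symm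
      have hsum2 : u*(K:ℝ)/(V:ℝ) + u = u*(N:ℝ)/(V:ℝ) := by
        field_simp
        rw [hNV]; ring
      rw [hsum2] at h1
      have hNVK : N - V = K := hK.symm
      rw [hNVK] at h1
      have hmul := mul_le_mul_of_nonneg_right h1 (le_of_lt (pow_pos hVpos N))
      have eL : E^2 * (u*(K:ℝ)/(V:ℝ))^K * (V:ℝ)^N = E^2 * ((u*(K:ℝ))^K * (V:ℝ)^V) := by
        rw [div_pow]
        have hsplit : (V:ℝ)^N = (V:ℝ)^K * (V:ℝ)^V := by rw [← pow_add]; congr 1; omega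
        rw [hsplit]
        field_simp
      have eR : (u*(N:ℝ)/(V:ℝ))^N * (V:ℝ)^N = (u*(N:ℝ))^N := by
        rw [div_pow, div_mul_cancel₀]
        exact ne_of_gt (pow_pos hVpos N)
      rw [eL, eR] at hmul
      have cb : ((N:ℝ))^N ≤ ((N.choose V : ℝ))^2 * ((V:ℝ)^V * (K:ℝ)^K) := by
        have hcb := choose_sq_bound N V hVN
        rw [hNVK] at hcb
        exact_mod_cast hcb
      have chain : E^2 * ((u*(K:ℝ))^K * (V:ℝ)^V)
          ≤ (((N.choose V:ℝ))^2 * u^V) * ((u*(K:ℝ))^K * (V:ℝ)^V) := by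
        calc E^2 * ((u*(K:ℝ))^K * (V:ℝ)^V) ≤ (u*(N:ℝ))^N := hmul
          _ = u^N * ((N:ℝ))^N := mul_pow u (N:ℝ) N
          _ ≤ u^N * (((N.choose V:ℝ))^2 * ((V:ℝ)^V * (K:ℝ)^K)) :=
              mul_le_mul_of_nonneg_left cb (by positivity)
          _ = (((N.choose V:ℝ))^2 * u^V) * ((u*(K:ℝ))^K * (V:ℝ)^V) := by
              rw [mul_pow u (K:ℝ) K]
              have husplit : u^N = u^V * u^K := by rw [← pow_add, hVK]
              rw [husplit]; ring
      have hfac : 0 < (u*(K:ℝ))^K * (V:ℝ)^V := by positivity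
      have hE2 : E^2 ≤ ((N.choose V:ℝ))^2 * u^V := le_of_mul_le_mul_right chain hfac
      apply habs ((N.choose V:ℝ) * s^V) (by positivity)
      calc E^2 ≤ ((N.choose V:ℝ))^2 * u^V := hE2
        _ = ((N.choose V:ℝ) * s^V)^2 := by
            rw [mul_pow]
            congr 1
            rw [hu, pow_right_comm]
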